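/- arXiv:math-ph/0504073 — 2 statements merged into one kernel-verified Lean document; each statement's English description precedes it below -/
import Mathlib

section
/- If a smooth Hamiltonian vector field H_p on R^{2n} satisfies a Lipschitz bound ||H_p(z1) - H_p(z2)|| ≤ a ||z1 - z2|| for all z1, z2 in a compact invariant set K, then every nonconstant periodic orbit of the flow contained in K has period at least 2π/a. -/
open Real

open MeasureTheory Set Filter intervalIntegral AddCircle ContinuousMap Topology in
private lemma yorke_parseval_line {T : ℝ} [hT : Fact (0 < T)] (h : ℝ → ℂ) (hc : Continuous h)
    (hp : h 0 = h T) :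
    Summable (fun nn : ℤ => ‖fourierCoeffOn (lt_add_of_pos_right 0 hT.out) h nn‖ ^ 2) ∧
    ∑' nn : ℤ, ‖fourierCoeffOn (lt_add_of_pos_right 0 hT.out) h nn‖ ^ 2
      = (1 / T) * ∫ t in (0:ℝ)..T, ‖h t‖ ^ 2 := by
  set H : C(AddCircle T, ℂ) :=
    ⟨AddCircle.liftIco T 0 h, AddCircle.liftIco_zero_continuous hp hc.continuousOn⟩ with hH
  set HL : Lp ℂ 2 (@haarAddCircle T hT) := toLp (E := ℂ) 2 haarAddCircle ℂ H with hHL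
  have hcoeff : ∀ nn : ℤ, fourierCoeff (HL : AddCircle T → ℂ) nn
      = fourierCoeffOn (lt_add_of_pos_right 0 hT.out) h nn := by
    intro nn; rw [hHL, fourierCoeff_toLp]; exact fourierCoeff_liftIco_eq h nn
  -- Parseval
  have P := tsum_sq_fourierCoeff HL
  -- RHS rewrite
  have hae : (fun t : AddCircle T => ‖(HL : AddCircle T → ℂ) t‖ ^ 2)
      =ᵐ[@haarAddCircle T hT] fun t => ‖H t‖ ^ 2 := by
    filter_upwards [ContinuousMap.coeFn_toLp (p := 2) (haarAddCircle (T := T)) (𝕜 := ℂ) H] with t ht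
    rw [ht]
  have hint : ∫ t : AddCircle T, ‖(HL : AddCircle T → ℂ) t‖ ^ 2 ∂haarAddCircle
      = ∫ t : AddCircle T, ‖H t‖ ^ 2 ∂haarAddCircle := integral_congr_ae hae
  -- relate haar integral to interval integral
  have hpre := AddCircle.intervalIntegral_preimage T 0 (fun z : AddCircle T => ‖H z‖ ^ 2)
  rw [volume_eq_smul_haarAddCircle, MeasureTheory.integral_smul_measure _ _,
    ENNReal.toReal_ofReal hT.out.le] at hpre
  -- hpre : ∫ x in 0..0+T, ‖H ↑x‖^2 = T • ∫ z, ‖H z‖^2 ∂haar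
  have hIco : ∫ x in (0:ℝ)..(0+T), ‖H (x : AddCircle T)‖ ^ 2
      = ∫ t in (0:ℝ)..T, ‖h t‖ ^ 2 := by
    rw [zero_add]
    apply intervalIntegral.integral_congr_ae
    have hTae : ∀ᵐ x : ℝ, x ≠ T := by
      refine (Set.countable_singleton T).ae_notMem volume |>.mono ?_
      intro x hx; simpa using hx
    filter_upwards [hTae] with x hx hxI
    rw [uIoc_of_le hT.out.le] at hxI
    have : x ∈ Ico (0:ℝ) T := ⟨hxI.1.le, lt_of_le_of_ne hxI.2 hx⟩
    show ‖H ((x : ℝ) : AddCircle T)‖ ^ 2 = ‖h x‖ ^ 2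
    rw [hH]
    simp only [ContinuousMap.coe_mk]
    rw [AddCircle.liftIco_zero_coe_apply this]
  -- summability
  have hmem : Memℓp (fun nn : ℤ => (fourierBasis.repr HL) nn) 2 := lp.memℓp (fourierBasis.repr HL)
  have hsumm : Summable (fun nn : ℤ => ‖fourierCoeffOn (lt_add_of_pos_right 0 hT.out) h nn‖ ^ 2) := by
    have h2 : (0:ℝ) < (2 : ENNReal).toReal := by norm_num
    have := (memℓp_gen_iff h2).mp hmem
    have heq : (fun nn : ℤ => ‖(fourierBasis.repr HL) nn‖ ^ (2 : ENNReal).toReal)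
        = fun nn : ℤ => ‖fourierCoeffOn (lt_add_of_pos_right 0 hT.out) h nn‖ ^ 2 := by
      funext nn
      rw [fourierBasis_repr, hcoeff nn]
      norm_num [Real.rpow_natCast]
    rwa [heq] at this
  refine ⟨hsumm, ?_⟩
  have hP2 : ∑' nn : ℤ, ‖fourierCoeffOn (lt_add_of_pos_right 0 hT.out) h nn‖ ^ 2
      = ∫ t : AddCircle T, ‖H t‖ ^ 2 ∂haarAddCircle := by
    rw [← hint, ← P]
    exact tsum_congr fun nn => by rw [hcoeff nn]
  rw [hP2]
  rw [hIco] at hpre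
  rw [smul_eq_mul] at hpre
  field_simp [hT.out.ne'] at hpre ⊢
  linarith [hpre]


open MeasureTheory Set Filter intervalIntegral AddCircle ContinuousMap Topology in
private lemma yorke_coef_bound {T : ℝ} [hT : Fact (0 < T)] {g g' : ℝ → ℂ}
    (hderiv : ∀ t, HasDerivAt g (g' t) t) (hg'c : Continuous g')
    (hgp : g 0 = g (0 + T)) {nn : ℤ} (hn : nn ≠ 0) :
    ‖fourierCoeffOn (lt_add_of_pos_right 0 hT.out) g nn‖
      ≤ T / (2 * π) * ‖fourierCoeffOn (lt_add_of_pos_right 0 hT.out) g' nn‖ := by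
  have hrel := fourierCoeffOn_of_hasDerivAt (lt_add_of_pos_right 0 hT.out) hn
    (fun x _ => hderiv x) (hg'c.intervalIntegrable 0 (0 + T))
  rw [← hgp, sub_self, mul_zero, zero_sub] at hrel
  rw [hrel]
  have h1 : |(nn:ℝ)| ≥ 1 := by
    rw [← Int.cast_abs]
    exact_mod_cast Int.one_le_abs hn
  have hnorm : ‖(1 : ℂ) / (-2 * ↑π * Complex.I * ↑nn)‖ = 1 / (2 * π * |(nn : ℝ)|) := by
    rw [norm_div, norm_one, norm_mul, norm_mul, norm_mul]
    simp [abs_of_pos pi_pos]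
  rw [norm_mul, hnorm, norm_neg, norm_mul]
  have h2 : ‖(((0:ℝ) + T : ℝ) : ℂ) - ((0:ℝ) : ℂ)‖ = T := by
    rw [← Complex.ofReal_sub, Complex.norm_real]
    norm_num [abs_of_pos hT.out]
  rw [h2]
  rw [div_mul_eq_mul_div, one_mul]
  rw [div_le_iff₀ (by positivity : (0:ℝ) < 2 * π * |(nn:ℝ)|)]
  have hpos : 0 < π := pi_pos
  have := norm_nonneg (fourierCoeffOn (lt_add_of_pos_right 0 hT.out) g' nn)
  have h3 : T / (2 * π) * ‖fourierCoeffOn (lt_add_of_pos_right 0 hT.out) g' nn‖ * (2 * π * |(nn:ℝ)|)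
      = T * ‖fourierCoeffOn (lt_add_of_pos_right 0 hT.out) g' nn‖ * |(nn:ℝ)| := by
    field_simp
  rw [h3]
  nlinarith [mul_nonneg hT.out.le this]


open MeasureTheory Set Filter intervalIntegral AddCircle ContinuousMap Topology in
private lemma yorke_wirtinger {T : ℝ} (hT : 0 < T) {g g' : ℝ → ℂ}
    (hderiv : ∀ t, HasDerivAt g (g' t) t) (hg'c : Continuous g')
    (hgp : g 0 = g T) (hg'p : g' 0 = g' T)
    (hmean : (∫ t in (0:ℝ)..T, g t) = 0) :
    ∫ t in (0:ℝ)..T, ‖g t‖ ^ 2 ≤ (T / (2 * π)) ^ 2 * ∫ t in (0:ℝ)..T, ‖g' t‖ ^ 2 := by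
  haveI hTf : Fact (0 < T) := ⟨hT⟩
  have hgc : Continuous g := by
    rw [continuous_iff_continuousAt]; exact fun t => (hderiv t).continuousAt
  obtain ⟨Sg, Pg⟩ := yorke_parseval_line g hgc hgp
  obtain ⟨Sg', Pg'⟩ := yorke_parseval_line g' hg'c hg'p
  have hc0 : fourierCoeffOn (lt_add_of_pos_right 0 hTf.out) g 0 = 0 := by
    rw [fourierCoeffOn_eq_integral]
    simp only [neg_zero, fourier_zero, one_smul, zero_add, sub_zero]
    rw [hmean, smul_zero]
  have hsq : ∀ nn : ℤ, ‖fourierCoeffOn (lt_add_of_pos_right 0 hTf.out) g nn‖ ^ 2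
      ≤ (T / (2 * π)) ^ 2 * ‖fourierCoeffOn (lt_add_of_pos_right 0 hTf.out) g' nn‖ ^ 2 := by
    intro nn
    rcases eq_or_ne nn 0 with rfl | hn
    · rw [hc0]
      simp only [norm_zero]
      norm_num
      positivity
    · have hb := yorke_coef_bound (T := T) hderiv hg'c (by rwa [zero_add]) hn
      have h0 : (0:ℝ) ≤ ‖fourierCoeffOn (lt_add_of_pos_right 0 hTf.out) g nn‖ := norm_nonneg _
      calc ‖fourierCoeffOn (lt_add_of_pos_right 0 hTf.out) g nn‖ ^ 2
          ≤ (T / (2 * π) * ‖fourierCoeffOn (lt_add_of_pos_right 0 hTf.out) g' nn‖) ^ 2 :=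
            pow_le_pow_left₀ h0 hb 2
        _ = (T / (2 * π)) ^ 2 * ‖fourierCoeffOn (lt_add_of_pos_right 0 hTf.out) g' nn‖ ^ 2 := by
            ring
  have hT2 : ∑' nn : ℤ, ‖fourierCoeffOn (lt_add_of_pos_right 0 hTf.out) g nn‖ ^ 2
      ≤ ∑' nn : ℤ, (T / (2 * π)) ^ 2 *
        ‖fourierCoeffOn (lt_add_of_pos_right 0 hTf.out) g' nn‖ ^ 2 :=
    Summable.tsum_le_tsum hsq Sg (Sg'.mul_left _)
  rw [tsum_mul_left, Pg, Pg'] at hT2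
  calc ∫ t in (0:ℝ)..T, ‖g t‖ ^ 2
      = T * ((1 / T) * ∫ t in (0:ℝ)..T, ‖g t‖ ^ 2) := by field_simp
    _ ≤ T * ((T / (2 * π)) ^ 2 * ((1 / T) * ∫ t in (0:ℝ)..T, ‖g' t‖ ^ 2)) :=
        mul_le_mul_of_nonneg_left hT2 hT.le
    _ = (T / (2 * π)) ^ 2 * ∫ t in (0:ℝ)..T, ‖g' t‖ ^ 2 := by field_simp


open MeasureTheory Set Filter intervalIntegral Topology in
private lemma yorke_deriv_norm_le_of_lip {E : Type*} [NormedAddCommGroup E] [NormedSpace ℝ E]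
    {u x : ℝ → E} {u' x' : E} {t : ℝ} {a : ℝ}
    (hu : HasDerivAt u u' t) (hx : HasDerivAt x x' t)
    (h : ∀ s, ‖u s - u t‖ ≤ a * ‖x s - x t‖) : ‖u'‖ ≤ a * ‖x'‖ := by
  have h1 : Filter.Tendsto (fun s => ‖slope u t s‖) (𝓝[≠] t) (𝓝 ‖u'‖) :=
    (continuous_norm.tendsto _).comp (hasDerivAt_iff_tendsto_slope.mp hu)
  have h2 : Filter.Tendsto (fun s => a * ‖slope x t s‖) (𝓝[≠] t) (𝓝 (a * ‖x'‖)) :=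
    ((continuous_norm.tendsto _).comp (hasDerivAt_iff_tendsto_slope.mp hx)).const_mul a
  refine le_of_tendsto_of_tendsto' h1 h2 ?_
  intro s
  simp only [slope_def_module, norm_smul, norm_inv, Real.norm_eq_abs]
  calc |s - t|⁻¹ * ‖u s - u t‖ ≤ |s - t|⁻¹ * (a * ‖x s - x t‖) := by
        apply mul_le_mul_of_nonneg_left (h s) (by positivity)
    _ = a * (|s - t|⁻¹ * ‖x s - x t‖) := by ring


set_option maxHeartbeats 2000000 in
/-- Yorke's theorem: a Lipschitz bound `a` on the vector field on a compact
invariant set forces every nonconstant periodic orbit in the set to have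
period at least `2π/a`. -/
theorem yorke_minimal_period
    (n : ℕ) (F : EuclideanSpace ℝ (Fin (2 * n)) → EuclideanSpace ℝ (Fin (2 * n)))
    (hF : ContDiff ℝ 1 F)
    (Φ : ℝ → EuclideanSpace ℝ (Fin (2 * n)) → EuclideanSpace ℝ (Fin (2 * n)))
    (hΦ0 : ∀ z, Φ 0 z = z)
    (hflow : ∀ z t, HasDerivAt (fun s => Φ s z) (F (Φ t z)) t)
    (K : Set (EuclideanSpace ℝ (Fin (2 * n)))) (hK : IsCompact K)
    (hinv : ∀ z ∈ K, ∀ t : ℝ, Φ t z ∈ K)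
    (a : ℝ) (ha : 0 < a)
    (hLip : ∀ z1 ∈ K, ∀ z2 ∈ K, ‖F z1 - F z2‖ ≤ a * ‖z1 - z2‖)
    (z : EuclideanSpace ℝ (Fin (2 * n))) (hz : z ∈ K)
    (T : ℝ) (hT : 0 < T) (hper : Φ T z = z)
    (hnonconst : ∃ t : ℝ, Φ t z ≠ z) :
    2 * π / a ≤ T := by
  classical
  open MeasureTheory Set Filter intervalIntegral Topology in
  set x : ℝ → EuclideanSpace ℝ (Fin (2 * n)) := fun t => Φ t z with hxdef
  set u : ℝ → EuclideanSpace ℝ (Fin (2 * n)) := fun t => F (x t) with hudef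
  set w : ℝ → EuclideanSpace ℝ (Fin (2 * n)) := fun t => fderiv ℝ F (x t) (u t) with hwdef
  have hx : ∀ t, HasDerivAt x (u t) t := fun t => hflow z t
  have hxc : Continuous x := continuous_iff_continuousAt.mpr fun t => (hx t).continuousAt
  have huc : Continuous u := (hF.continuous).comp hxc
  have hu : ∀ t, HasDerivAt u (w t) t := fun t =>
    ((hF.differentiable one_ne_zero).differentiableAt.hasFDerivAt).comp_hasDerivAt t (hx t)
  have hwc : Continuous w := ((hF.continuous_fderiv one_ne_zero).comp hxc).clm_apply huc
  have hxK : ∀ t, x t ∈ K := fun t => hinv z hz t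
  have hbound : ∀ t, ‖w t‖ ≤ a * ‖u t‖ := fun t =>
    yorke_deriv_norm_le_of_lip (hu t) (hx t)
      (fun s => hLip (x s) (hxK s) (x t) (hxK t))
  -- periodicity of the orbit
  have hperiod : ∀ s : ℝ, x (s + T) = x s := by
    have lipF : LipschitzOnWith (Real.toNNReal a) F K := by
      rw [lipschitzOnWith_iff_dist_le_mul]
      intro p hp q hq
      rw [dist_eq_norm, dist_eq_norm]
      calc ‖F p - F q‖ ≤ a * ‖p - q‖ := hLip p hp q hq
        _ = (Real.toNNReal a : ℝ) * ‖p - q‖ := by rw [Real.coe_toNNReal a ha.le]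
    intro s
    have hmem : (0:ℝ) ∈ Set.Ioo (-(|s| + 1)) (|s| + 1) := by
      constructor <;> [linarith [abs_nonneg s]; linarith [abs_nonneg s]]
    have hder1 : ∀ t ∈ Set.Ioo (-(|s| + 1)) (|s| + 1),
        HasDerivAt (fun t => Φ (t + T) z) (F (Φ (t + T) z)) t := by
      intro t _
      have := (hflow z (t + T)).scomp t ((hasDerivAt_id t).add_const T)
      simpa [Function.comp_def] using this
    have hcont1 : ContinuousOn (fun t => Φ (t + T) z) (Set.Icc (-(|s| + 1)) (|s| + 1)) := by
      apply Continuous.continuousOn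
      rw [continuous_iff_continuousAt]
      intro t
      exact ((hflow z (t + T)).scomp t ((hasDerivAt_id t).add_const T)).continuousAt
    have key := ODE_solution_unique_of_mem_Icc (v := fun _ y => F y) (s := fun _ => K)
      (fun _ _ => lipF) hmem hcont1 hder1 (fun t _ => hinv z hz (t + T))
      (hxc.continuousOn) (fun t _ => hflow z t) (fun t _ => hinv z hz t)
      (by show Φ (0 + T) z = Φ 0 z; rw [zero_add, hper, hΦ0])
    exact key ⟨by linarith [neg_abs_le s], by linarith [le_abs_self s]⟩
  have hx0 : x 0 = z := hΦ0 z
  have hxT : x T = z := hper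
  have hu0T : u 0 = u T := by show F (x 0) = F (x T); rw [hx0, hxT]
  have hw0T : w 0 = w T := by
    show fderiv ℝ F (x 0) (u 0) = fderiv ℝ F (x T) (u T)
    rw [hx0, hxT, hu0T]
  -- coordinate functions
  have hgideriv : ∀ (i : Fin (2 * n)) (t : ℝ),
      HasDerivAt (fun t => ((u t i : ℝ) : ℂ)) ((w t i : ℝ) : ℂ) t := by
    intro i t
    have h1 : HasDerivAt (fun t => u t i) (w t i) t :=
      (EuclideanSpace.proj (𝕜 := ℝ) i).hasFDerivAt.comp_hasDerivAt t (hu t)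
    exact Complex.ofRealCLM.hasFDerivAt.comp_hasDerivAt t h1
  have hxideriv : ∀ (i : Fin (2 * n)) (t : ℝ),
      HasDerivAt (fun t => x t i) (u t i) t := by
    intro i t
    exact (EuclideanSpace.proj (𝕜 := ℝ) i).hasFDerivAt.comp_hasDerivAt t (hx t)
  have huic : ∀ i : Fin (2 * n), Continuous (fun t => u t i) :=
    fun i => (continuous_apply i).comp (Continuous.comp (PiLp.continuous_ofLp 2 _) huc)
  have hwic : ∀ i : Fin (2 * n), Continuous (fun t => w t i) :=
    fun i => (continuous_apply i).comp (Continuous.comp (PiLp.continuous_ofLp 2 _) hwc)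
  -- mean zero
  have hmeani : ∀ i : Fin (2 * n), (∫ t in (0:ℝ)..T, ((u t i : ℝ) : ℂ)) = 0 := by
    intro i
    rw [intervalIntegral.integral_ofReal]
    have hFTC : (∫ t in (0:ℝ)..T, u t i) = x T i - x 0 i :=
      intervalIntegral.integral_eq_sub_of_hasDerivAt (fun t _ => hxideriv i t)
        ((huic i).intervalIntegrable 0 T)
    rw [hFTC, hxT, hx0, sub_self, Complex.ofReal_zero]
  -- Wirtinger for each coordinate
  have hWi : ∀ i : Fin (2 * n),
      (∫ t in (0:ℝ)..T, (u t i) ^ 2) ≤ (T / (2 * π)) ^ 2 * ∫ t in (0:ℝ)..T, (w t i) ^ 2 := by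
    intro i
    have hW := yorke_wirtinger hT (g := fun t => ((u t i : ℝ) : ℂ))
      (g' := fun t => ((w t i : ℝ) : ℂ)) (hgideriv i)
      (Complex.continuous_ofReal.comp (hwic i))
      (by show ((u 0 i : ℝ) : ℂ) = ((u T i : ℝ) : ℂ); rw [hu0T])
      (by show ((w 0 i : ℝ) : ℂ) = ((w T i : ℝ) : ℂ); rw [hw0T]) (hmeani i)
    simpa only [Complex.norm_real, Real.norm_eq_abs, sq_abs] using hW
  -- sum over coordinates
  have hnormsq : ∀ (v : EuclideanSpace ℝ (Fin (2 * n))), ‖v‖ ^ 2 = ∑ i, (v i) ^ 2 := by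
    intro v
    rw [EuclideanSpace.norm_eq, Real.sq_sqrt (by positivity)]
    congr 1
    funext i
    rw [Real.norm_eq_abs, sq_abs]
  have hsumA : (∫ t in (0:ℝ)..T, ‖u t‖ ^ 2)
      = ∑ i, ∫ t in (0:ℝ)..T, (u t i) ^ 2 := by
    rw [← intervalIntegral.integral_finset_sum (f := fun i t => (u t i) ^ 2)
      (fun i _ => (((huic i).pow 2).intervalIntegrable 0 T))]
    apply intervalIntegral.integral_congr
    intro t _
    exact hnormsq (u t)
  have hsumB : (∫ t in (0:ℝ)..T, ‖w t‖ ^ 2)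
      = ∑ i, ∫ t in (0:ℝ)..T, (w t i) ^ 2 := by
    rw [← intervalIntegral.integral_finset_sum (f := fun i t => (w t i) ^ 2)
      (fun i _ => (((hwic i).pow 2).intervalIntegrable 0 T))]
    apply intervalIntegral.integral_congr
    intro t _
    exact hnormsq (w t)
  have hAB : (∫ t in (0:ℝ)..T, ‖u t‖ ^ 2)
      ≤ (T / (2 * π)) ^ 2 * ∫ t in (0:ℝ)..T, ‖w t‖ ^ 2 := by
    rw [hsumA, hsumB, Finset.mul_sum]
    exact Finset.sum_le_sum fun i _ => hWi i
  have hBA : (∫ t in (0:ℝ)..T, ‖w t‖ ^ 2) ≤ a ^ 2 * ∫ t in (0:ℝ)..T, ‖u t‖ ^ 2 := by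
    rw [← intervalIntegral.integral_const_mul]
    apply intervalIntegral.integral_mono_on hT.le
      ((hwc.norm.pow 2).intervalIntegrable 0 T)
      ((continuous_const.mul (huc.norm.pow 2)).intervalIntegrable 0 T)
    intro t _
    have h1 := hbound t
    show ‖w t‖ ^ 2 ≤ a ^ 2 * ‖u t‖ ^ 2
    nlinarith [norm_nonneg (w t), norm_nonneg (u t), ha.le]
  -- positivity of the integral
  have hApos : 0 < ∫ t in (0:ℝ)..T, ‖u t‖ ^ 2 := by
    obtain ⟨t₀, ht₀⟩ := hnonconst
    have hPer : Function.Periodic x T := hperiod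
    set s₀ : ℝ := t₀ - ⌊t₀ / T⌋ * T with hs₀def
    have hs₀eq : x s₀ = x t₀ := hPer.sub_int_mul_eq ⌊t₀ / T⌋
    have hs₀mem : s₀ ∈ Set.Ico (0:ℝ) T := by
      have h1 : s₀ = T * Int.fract (t₀ / T) := by
        rw [hs₀def, Int.fract]
        field_simp
      constructor
      · rw [h1]; exact mul_nonneg hT.le (Int.fract_nonneg _)
      · rw [h1]
        have := Int.fract_lt_one (t₀ / T)
        nlinarith [Int.fract_nonneg (t₀ / T)]
    have hxs₀ : x s₀ ≠ z := by rw [hs₀eq]; exact ht₀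
    -- find a point where u ≠ 0
    have hune : ∃ s₁ ∈ Set.Icc (0:ℝ) T, u s₁ ≠ 0 := by
      by_contra hcon
      push_neg at hcon
      have hconst := constant_of_has_deriv_right_zero (f := x) (a := 0) (b := T)
        hxc.continuousOn
        (fun s hs => by
          have := (hx s).hasDerivWithinAt (s := Set.Ici s)
          rwa [hcon s ⟨hs.1, hs.2.le⟩] at this)
      exact hxs₀ (by rw [hconst s₀ ⟨hs₀mem.1, hs₀mem.2.le⟩, hx0])
    obtain ⟨s₁, hs₁, hu₁⟩ := hune
    have hopen : IsOpen {s : ℝ | u s ≠ 0} := isOpen_ne.preimage huc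
    obtain ⟨δ, hδpos, hδball⟩ := Metric.isOpen_iff.mp hopen s₁ hu₁
    set ε : ℝ := min δ T with hεdef
    have hεpos : 0 < ε := lt_min hδpos hT
    have hεT : ε ≤ T := min_le_right δ T
    have hεδ : ε ≤ δ := min_le_left δ T
    set s₂ : ℝ := min (max s₁ (ε / 2)) (T - ε / 2) with hs₂def
    have hs₂mem : s₂ ∈ Set.Ioo (0:ℝ) T := by
      constructor
      · rw [hs₂def]
        apply lt_min
        · exact lt_of_lt_of_le (by linarith) (le_max_right s₁ (ε / 2))
        · linarith
      · rw [hs₂def]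
        exact lt_of_le_of_lt (min_le_right _ _) (by linarith)
    have hs₂close : |s₂ - s₁| ≤ ε / 2 := by
      rw [abs_le]
      constructor
      · rw [hs₂def]
        rcases le_total s₁ (T - ε / 2) with hc | hc
        · have : min (max s₁ (ε / 2)) (T - ε / 2) ≥ s₁ := by
            apply le_min (le_max_left _ _) hc
          linarith
        · have h1 : min (max s₁ (ε / 2)) (T - ε / 2) = T - ε / 2 :=
            min_eq_right (hc.trans (le_max_left _ _))
          rw [h1]
          linarith [hs₁.2]
      · rw [hs₂def]
        rcases le_total s₁ (ε / 2) with hc | hc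
        · rw [max_eq_right hc]
          linarith [min_le_left (ε / 2) (T - ε / 2), hs₁.1]
        · rw [max_eq_left hc]
          linarith [min_le_left s₁ (T - ε / 2), hεpos]
    have hball2 : ∀ y : ℝ, |y - s₂| < δ / 2 → u y ≠ 0 := by
      intro y hy
      apply hδball
      rw [Metric.mem_ball, Real.dist_eq]
      have : |y - s₁| ≤ |y - s₂| + |s₂ - s₁| := by
        calc |y - s₁| = |(y - s₂) + (s₂ - s₁)| := by ring_nf
          _ ≤ |y - s₂| + |s₂ - s₁| := abs_add_le _ _
      have hεδ2 : ε / 2 ≤ δ / 2 := by linarith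
      linarith
    set r : ℝ := min (δ / 2) (min s₂ (T - s₂)) with hrdef
    have hrpos : 0 < r := lt_min (by linarith) (lt_min hs₂mem.1 (by linarith [hs₂mem.2]))
    have hsubset : Set.Ioo (s₂ - r) (s₂ + r) ⊆
        Function.support (fun t => ‖u t‖ ^ 2) ∩ Set.Ioc (0:ℝ) T := by
      intro y hy
      have hyr : |y - s₂| < r := abs_sub_lt_iff.mpr ⟨by linarith [hy.2], by linarith [hy.1]⟩
      constructor
      · have huy : u y ≠ 0 := hball2 y (lt_of_lt_of_le hyr (min_le_left _ _))
        simp only [Function.mem_support]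
        exact pow_ne_zero 2 (norm_ne_zero_iff.mpr huy)
      · have h1 : r ≤ s₂ := (min_le_right _ _).trans (min_le_left _ _)
        have h2 : r ≤ T - s₂ := (min_le_right _ _).trans (min_le_right _ _)
        exact ⟨by linarith [hy.1], by linarith [hy.2]⟩
    have hsubpos : 0 < ∫ t in (s₂ - r)..(s₂ + r), ‖u t‖ ^ 2 := by
      apply intervalIntegral_pos_of_pos_on
        ((huc.norm.pow 2).intervalIntegrable _ _)
        (fun y hy => by
          have := (hsubset hy).1
          simp only [Function.mem_support] at this
          show 0 < ‖u y‖ ^ 2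
          exact lt_of_le_of_ne (sq_nonneg _) (Ne.symm this))
      linarith
    have h1 : r ≤ s₂ := (min_le_right _ _).trans (min_le_left _ _)
    have h2 : r ≤ T - s₂ := (min_le_right _ _).trans (min_le_right _ _)
    calc (0:ℝ) < ∫ t in (s₂ - r)..(s₂ + r), ‖u t‖ ^ 2 := hsubpos
      _ ≤ ∫ t in (0:ℝ)..T, ‖u t‖ ^ 2 := by
          apply intervalIntegral.integral_mono_interval (by linarith) (by linarith) (by linarith)
            (Filter.Eventually.of_forall (fun t => by show 0 ≤ ‖u t‖ ^ 2; positivity))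
            ((huc.norm.pow 2).intervalIntegrable _ _)
  -- combine
  have hfinal : (∫ t in (0:ℝ)..T, ‖u t‖ ^ 2)
      ≤ ((T / (2 * π)) ^ 2 * a ^ 2) * ∫ t in (0:ℝ)..T, ‖u t‖ ^ 2 := by
    calc (∫ t in (0:ℝ)..T, ‖u t‖ ^ 2)
        ≤ (T / (2 * π)) ^ 2 * ∫ t in (0:ℝ)..T, ‖w t‖ ^ 2 := hAB
      _ ≤ (T / (2 * π)) ^ 2 * (a ^ 2 * ∫ t in (0:ℝ)..T, ‖u t‖ ^ 2) :=
          mul_le_mul_of_nonneg_left hBA (by positivity)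
      _ = ((T / (2 * π)) ^ 2 * a ^ 2) * ∫ t in (0:ℝ)..T, ‖u t‖ ^ 2 := by ring
  have hone : 1 ≤ (T / (2 * π)) ^ 2 * a ^ 2 := by
    by_contra hcon
    push_neg at hcon
    nlinarith
  have hsq2 : (2 * π) ^ 2 ≤ (T * a) ^ 2 := by
    have hpi : (0:ℝ) < (2 * π) ^ 2 := by positivity
    rw [div_pow, div_mul_eq_mul_div, le_div_iff₀ hpi, one_mul] at hone
    nlinarith
  have h2pi : 2 * π ≤ T * a :=
    le_of_pow_le_pow_left₀ two_ne_zero (by positivity) hsq2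
  rw [div_le_iff₀ ha]
  exact h2pi
end

section
/- Let V_{2k}, W_{2k} : R^n → R be continuous, positively homogeneous of degree 2k, nonvanishing away from 0. If ∫_{S^{n-1}} |V_{2k}(η)|^{-n/(2k)} dη = ∫_{S^{n-1}} |W_{2k}(η)|^{-n/(2k)} dη, then ∫_{R^n} f(|V_{2k}(x)|) dx = ∫_{R^n} f(|W_{2k}(x)|) dx for every f ∈ L¹(R₊, r^{n/(2k)-1} dr). -/
open MeasureTheory Set Real

private lemma aux_pointwise (n k : ℕ) (hn : 0 < n) (hk : 0 < k) (f : ℝ → ℝ) (c : ℝ)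
    {x : ℝ} (hx : x ∈ Ioi (0:ℝ)) :
    (|2*(k:ℝ)| * x ^ (2*(k:ℝ) - 1)) •
        ((2*(k:ℝ))⁻¹ • ((x ^ (2*(k:ℝ))) ^ ((n:ℝ)/(2*(k:ℝ)) - 1) * f ((x ^ (2*(k:ℝ))) * c)))
      = x ^ (n-1) * f (x ^ (2*k) * c) := by
  have hx0 : (0:ℝ) < x := hx
  have hk0 : (0:ℝ) < 2*(k:ℝ) := by positivity
  have hcast : ((2*k : ℕ) : ℝ) = 2*(k:ℝ) := by push_cast; ring
  have hxp : x ^ (2*(k:ℝ)) = x ^ (2*k : ℕ) := by rw [← hcast, rpow_natCast]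
  have hxn : x ^ ((n:ℝ) - 1) = x ^ (n - 1 : ℕ) := by
    rw [show ((n:ℝ) - 1) = ((n - 1 : ℕ) : ℝ) by
      rw [Nat.cast_sub hn]; norm_num, rpow_natCast]
  rw [smul_eq_mul, smul_eq_mul, abs_of_pos hk0, ← hxp, ← hxn,
    ← Real.rpow_mul hx0.le]
  have hexp : 2*(k:ℝ) - 1 + 2*(k:ℝ) * ((n:ℝ)/(2*(k:ℝ)) - 1) = (n:ℝ) - 1 := by
    field_simp
    ring
  calc (2*(k:ℝ) * x ^ (2*(k:ℝ) - 1)) *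
        ((2*(k:ℝ))⁻¹ * (x ^ (2*(k:ℝ) * ((n:ℝ)/(2*(k:ℝ)) - 1)) * f (x ^ (2*(k:ℝ)) * c)))
      = (2*(k:ℝ) * (2*(k:ℝ))⁻¹) *
        ((x ^ (2*(k:ℝ) - 1) * x ^ (2*(k:ℝ) * ((n:ℝ)/(2*(k:ℝ)) - 1))) * f (x ^ (2*(k:ℝ)) * c)) := by
        ring
    _ = x ^ ((n:ℝ) - 1) * f (x ^ (2*(k:ℝ)) * c) := by
        rw [mul_inv_cancel₀ hk0.ne', one_mul, ← Real.rpow_add hx0, hexp]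

private lemma aux_one_dim (n k : ℕ) (hn : 0 < n) (hk : 0 < k) (f : ℝ → ℝ) {c : ℝ} (hc : 0 < c) :
    ∫ r in Ioi (0:ℝ), r ^ (n-1) * f (r ^ (2*k) * c)
      = c ^ (-(n:ℝ)/(2*(k:ℝ))) * ((2*(k:ℝ))⁻¹ *
          ∫ s in Ioi (0:ℝ), f s * s ^ ((n:ℝ)/(2*(k:ℝ)) - 1)) := by
  have hk0 : (0:ℝ) < 2*(k:ℝ) := by positivity
  set α : ℝ := (n:ℝ)/(2*(k:ℝ)) - 1 with hα
  have key := integral_comp_rpow_Ioi (fun u => (2*(k:ℝ))⁻¹ • (u ^ α * f (u * c))) hk0.ne'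
  have h1 : ∫ r in Ioi (0:ℝ), r ^ (n-1) * f (r ^ (2*k) * c)
      = ∫ x in Ioi (0:ℝ), (|2*(k:ℝ)| * x ^ (2*(k:ℝ) - 1)) •
          ((fun u => (2*(k:ℝ))⁻¹ • (u ^ α * f (u * c))) (x ^ (2*(k:ℝ)))) :=
    (setIntegral_congr_fun measurableSet_Ioi
      (fun x hx => aux_pointwise n k hn hk f c hx)).symm
  rw [h1, key, integral_smul]
  have h2 : EqOn (fun u : ℝ => u ^ α * f (u * c))
      (fun u : ℝ => c ^ (-α) * ((fun s : ℝ => s ^ α * f s) (u * c))) (Ioi 0) := by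
    intro u hu
    have hu0 : (0:ℝ) < u := hu
    have hcα : c ^ α ≠ 0 := (rpow_pos_of_pos hc α).ne'
    simp only
    rw [mul_rpow hu0.le hc.le, rpow_neg hc.le]
    field_simp
  rw [setIntegral_congr_fun measurableSet_Ioi h2, integral_const_mul,
    integral_comp_mul_right_Ioi (fun s => s ^ α * f s) 0 hc, zero_mul]
  have h3 : ∫ s in Ioi (0:ℝ), s ^ α * f s = ∫ s in Ioi (0:ℝ), f s * s ^ α :=
    setIntegral_congr_fun measurableSet_Ioi fun s _ => mul_comm _ _
  have h4 : c ^ (-α) * c⁻¹ = c ^ (-(n:ℝ)/(2*(k:ℝ))) := by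
    rw [← rpow_neg_one c, ← rpow_add hc]
    congr 1
    rw [hα]
    ring
  rw [h3, smul_eq_mul, smul_eq_mul, ← h4]
  ring

private lemma aux_one_dim_int (n k : ℕ) (hn : 0 < n) (hk : 0 < k) (f : ℝ → ℝ) {c : ℝ} (hc : 0 < c)
    (hf : IntegrableOn (fun s => f s * s ^ ((n:ℝ)/(2*(k:ℝ)) - 1)) (Ioi 0)) :
    IntegrableOn (fun r => r ^ (n-1) * f (r ^ (2*k) * c)) (Ioi (0:ℝ)) := by
  have hk0 : (0:ℝ) < 2*(k:ℝ) := by positivity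
  set α : ℝ := (n:ℝ)/(2*(k:ℝ)) - 1 with hα
  have h1 : IntegrableOn (fun s : ℝ => s ^ α * f s) (Ioi 0) :=
    hf.congr_fun (fun s _ => mul_comm _ _) measurableSet_Ioi
  have h2 : IntegrableOn (fun u : ℝ => (c * u) ^ α * f (c * u)) (Ioi 0) := by
    have h := integrableOn_Ioi_comp_mul_left_iff (fun s : ℝ => s ^ α * f s) 0 hc
    rw [mul_zero] at h
    exact h.2 h1
  have h3 : IntegrableOn (fun u : ℝ => (2*(k:ℝ))⁻¹ • (u ^ α * f (u * c))) (Ioi 0) := by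
    have h4 : IntegrableOn
        (fun u : ℝ => (2*(k:ℝ))⁻¹ * (c ^ (-α) * ((c * u) ^ α * f (c * u)))) (Ioi 0) :=
      (h2.const_mul _).const_mul _
    refine h4.congr_fun (fun u hu => ?_) measurableSet_Ioi
    have hu0 : (0:ℝ) < u := hu
    have hcα : c ^ α ≠ 0 := (rpow_pos_of_pos hc α).ne'
    beta_reduce
    rw [mul_comm c u, mul_rpow hu0.le hc.le, rpow_neg hc.le, mul_comm u c,
      mul_comm c u]
    field_simp
    have hk' : (k:ℝ) ≠ 0 := Nat.cast_ne_zero.2 hk.ne'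
    rw [smul_eq_mul]
    field_simp
  have h5 := (integrableOn_Ioi_comp_rpow_iff
      (fun u => (2*(k:ℝ))⁻¹ • (u ^ α * f (u * c))) hk0.ne').2 h3
  exact h5.congr_fun (fun x hx => aux_pointwise n k hn hk f c hx) measurableSet_Ioi

private lemma aux_null (k : ℕ) (hk : 0 < k) {c : ℝ} (hc : 0 < c) {N : Set ℝ}
    (hN : volume N = 0) :
    volume {x : ℝ | 0 < x ∧ x ^ (2*k) * c ∈ N} = 0 := by
  have hk0 : (0:ℝ) < 2*(k:ℝ) := by positivity
  set ψ : ℝ → ℝ := fun y => (y / c) ^ (2*(k:ℝ))⁻¹ with hψ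
  have hsub : {x : ℝ | 0 < x ∧ x ^ (2*k) * c ∈ N} ⊆ ψ '' (N ∩ Ioi 0) := by
    rintro x ⟨hx0, hxN⟩
    refine ⟨x ^ (2*k) * c, ⟨hxN, mul_pos (pow_pos hx0 _) hc⟩, ?_⟩
    simp only [hψ]
    rw [mul_div_cancel_right₀ _ hc.ne', ← rpow_natCast x (2*k), ← Real.rpow_mul hx0.le]
    rw [show ((2*k : ℕ) : ℝ) * (2*(k:ℝ))⁻¹ = 1 by
      push_cast; field_simp]
    exact rpow_one x
  refine measure_mono_null hsub ?_
  have hdiff : DifferentiableOn ℝ ψ (N ∩ Ioi 0) := by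
    intro y hy
    have hy0 : (0:ℝ) < y := hy.2
    have h1 : HasDerivAt (fun y : ℝ => y / c) (1/c) y := by
      simpa using (hasDerivAt_id y).div_const c
    have h2 := (Real.hasDerivAt_rpow_const
      (x := y / c) (p := (2*(k:ℝ))⁻¹) (Or.inl (div_pos hy0 hc).ne')).comp y h1
    exact h2.differentiableAt.differentiableWithinAt
  exact addHaar_image_eq_zero_of_differentiableOn_of_addHaar_eq_zero volume hdiff
    (measure_mono_null inter_subset_left hN)

private lemma aux_vip_integral (m : ℕ) (g : ℝ → ℝ) :
    ∫ r : Ioi (0:ℝ), g r ∂(Measure.volumeIoiPow m) = ∫ r in Ioi (0:ℝ), r ^ m * g r := by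
  simp only [Measure.volumeIoiPow, ENNReal.ofReal]
  rw [integral_withDensity_eq_integral_smul
      ((measurable_subtype_coe.pow_const _).real_toNNReal),
    integral_subtype_comap measurableSet_Ioi (fun a => Real.toNNReal (a ^ m) • g a)]
  refine setIntegral_congr_fun measurableSet_Ioi fun x hx => ?_
  rw [NNReal.smul_def, Real.coe_toNNReal _ (pow_nonneg hx.out.le _), smul_eq_mul]

private lemma aux_vip_integrable (m : ℕ) (g : ℝ → ℝ)
    (hg : IntegrableOn (fun r : ℝ => r ^ m * g r) (Ioi 0)) :
    Integrable (fun r : Ioi (0:ℝ) => g r) (Measure.volumeIoiPow m) := by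
  simp only [Measure.volumeIoiPow, ENNReal.ofReal]
  rw [integrable_withDensity_iff_integrable_smul
      ((measurable_subtype_coe.pow_const _).real_toNNReal)]
  have h := (MeasurableEmbedding.subtype_coe (measurableSet_Ioi (a := (0:ℝ)))).integrable_map_iff
      (μ := Measure.comap Subtype.val volume) (g := fun a : ℝ => Real.toNNReal (a ^ m) • g a)
  rw [map_comap_subtype_coe measurableSet_Ioi] at h
  have h2 : Integrable (fun a : ℝ => Real.toNNReal (a ^ m) • g a) (volume.restrict (Ioi 0)) := by
    refine hg.congr ?_
    filter_upwards [ae_restrict_mem measurableSet_Ioi] with x hx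
    rw [NNReal.smul_def, Real.coe_toNNReal _ (pow_nonneg hx.out.le _), smul_eq_mul]
  exact h.1 h2

private lemma aux_inner_eq (n k : ℕ) (hn : 0 < n) (hk : 0 < k) (f : ℝ → ℝ) {c : ℝ} (hc : 0 < c) :
    ∫ r : Ioi (0:ℝ), f ((r : ℝ) ^ (2*k) * c) ∂(Measure.volumeIoiPow (n-1))
      = c ^ (-(n:ℝ)/(2*(k:ℝ))) * ((2*(k:ℝ))⁻¹ *
          ∫ s in Ioi (0:ℝ), f s * s ^ ((n:ℝ)/(2*(k:ℝ)) - 1)) := by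
  rw [aux_vip_integral (n-1) (fun x => f (x ^ (2*k) * c))]
  exact aux_one_dim n k hn hk f hc

private lemma aux_inner_int (n k : ℕ) (hn : 0 < n) (hk : 0 < k) (f : ℝ → ℝ) {c : ℝ} (hc : 0 < c)
    (hf : IntegrableOn (fun s => f s * s ^ ((n:ℝ)/(2*(k:ℝ)) - 1)) (Ioi 0)) :
    Integrable (fun r : Ioi (0:ℝ) => f ((r : ℝ) ^ (2*k) * c)) (Measure.volumeIoiPow (n-1)) :=
  aux_vip_integrable (n-1) (fun x => f (x ^ (2*k) * c)) (aux_one_dim_int n k hn hk f hc hf)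

set_option maxHeartbeats 4000000 in
theorem aux_key (n k : ℕ) (hn : 0 < n) (hk : 0 < k)
    (V : EuclideanSpace ℝ (Fin n) → ℝ) (hVc : Continuous V)
    (hVhom : ∀ (lam : ℝ), 0 < lam → ∀ x, V (lam • x) = lam ^ (2 * k) * V x)
    (hVne : ∀ x, x ≠ 0 → V x ≠ 0) (f : ℝ → ℝ)
    (hf : IntegrableOn (fun r => f r * r ^ ((n : ℝ) / (2 * k) - 1)) (Set.Ioi 0)) :
    ∫ x : EuclideanSpace ℝ (Fin n), f |V x|
      = (∫ η : Metric.sphere (0 : EuclideanSpace ℝ (Fin n)) 1,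
          |V (η : EuclideanSpace ℝ (Fin n))| ^ (-(n : ℝ) / (2 * k))
          ∂((volume : Measure (EuclideanSpace ℝ (Fin n))).toSphere))
        * ((2*(k:ℝ))⁻¹ * ∫ s in Ioi (0:ℝ), f s * s ^ ((n : ℝ) / (2 * k) - 1)) := by
  haveI : Nontrivial (EuclideanSpace ℝ (Fin n)) :=
    Module.nontrivial_of_finrank_pos (R := ℝ)
      (by rw [finrank_euclideanSpace_fin]; exact hn)
  have hdim : Module.finrank ℝ (EuclideanSpace ℝ (Fin n)) = n := finrank_euclideanSpace_fin
  have hsph : ∀ η : Metric.sphere (0 : EuclideanSpace ℝ (Fin n)) 1, 0 < |V η| :=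
    fun η => abs_pos.2 (hVne _ (Metric.ne_of_mem_sphere η.2 one_ne_zero))
  set μ := (volume : Measure (EuclideanSpace ℝ (Fin n))) with hμ
  set ν := Measure.volumeIoiPow (n-1) with hν
  set F : Metric.sphere (0 : EuclideanSpace ℝ (Fin n)) 1 × Ioi (0:ℝ) → ℝ :=
    fun p => f ((p.2 : ℝ) ^ (2*k) * |V p.1|) with hF
  have mp := μ.measurePreserving_homeomorphUnitSphereProd
  rw [hdim] at mp
  -- Step 1: polar coordinates
  have step1 : ∫ x, f |V x| ∂μ = ∫ p, F p ∂(μ.toSphere.prod ν) := by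
    have e1 : ∫ x, f |V x| ∂μ
        = ∫ x : ({0}ᶜ : Set (EuclideanSpace ℝ (Fin n))), f |V x.1| ∂(μ.comap Subtype.val) := by
      rw [integral_subtype_comap (measurableSet_singleton _).compl (fun x => f |V x|),
        restrict_compl_singleton]
    rw [e1, ← mp.integral_comp (Homeomorph.measurableEmbedding _) F]
    refine integral_congr_ae (Filter.Eventually.of_forall fun x => ?_)
    have hx : (x : EuclideanSpace ℝ (Fin n)) ≠ 0 := x.2
    have hnx : 0 < ‖(x : EuclideanSpace ℝ (Fin n))‖ := norm_pos_iff.2 hx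
    have h1 : V (x : EuclideanSpace ℝ (Fin n))
        = ‖(x : EuclideanSpace ℝ (Fin n))‖ ^ (2*k)
          * V (‖(x : EuclideanSpace ℝ (Fin n))‖⁻¹ • (x : EuclideanSpace ℝ (Fin n))) := by
      conv_lhs => rw [← smul_inv_smul₀ hnx.ne' (x : EuclideanSpace ℝ (Fin n))]
      exact hVhom _ hnx _
    show f |V x.1| = F (homeomorphUnitSphereProd _ x)
    simp only [hF, homeomorphUnitSphereProd, Homeomorph.homeomorph_mk_coe, Equiv.coe_fn_mk,
      homeomorphSphereProd_apply_fst_coe, homeomorphSphereProd_apply_snd_coe, one_smul, div_one]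
    congr 1
    rw [h1, abs_mul, abs_of_nonneg (pow_nonneg (norm_nonneg _) _)]
  -- measurable version of f
  have hfm : AEStronglyMeasurable (fun s => f s * s ^ ((n : ℝ) / (2 * k) - 1))
      (volume.restrict (Ioi 0)) := hf.1
  set f₀ : ℝ → ℝ :=
    fun s => hfm.mk _ s * Real.exp ((-((n : ℝ) / (2 * k) - 1)) * Real.log s) with hf₀
  have hf₀m : StronglyMeasurable f₀ :=
    (hfm.stronglyMeasurable_mk.measurable.mul
      ((Real.measurable_log.const_mul _).exp)).stronglyMeasurable
  have hrwexp : ∀ s : ℝ, 0 < s →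
      Real.exp ((-((n : ℝ) / (2 * k) - 1)) * Real.log s) = s ^ (-((n : ℝ) / (2 * k) - 1)) :=
    fun s hs => by rw [rpow_def_of_pos hs, mul_comm]
  have hae : ∀ᵐ s ∂(volume.restrict (Ioi (0:ℝ))), f s = f₀ s := by
    filter_upwards [hfm.ae_eq_mk, ae_restrict_mem measurableSet_Ioi] with s h1 h2
    have hs : (0:ℝ) < s := h2
    simp only [hf₀]
    rw [hrwexp s hs, ← h1, mul_assoc, ← rpow_add hs, add_neg_cancel, rpow_zero, mul_one]
  have hBnull : volume ({s : ℝ | ¬ f s = f₀ s} ∩ Ioi 0) = 0 := by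
    have h := ae_iff.1 hae
    rwa [Measure.restrict_apply_eq_zero' measurableSet_Ioi] at h
  set N := toMeasurable volume ({s : ℝ | ¬ f s = f₀ s} ∩ Ioi 0) with hNdef
  have hNmeas : MeasurableSet N := measurableSet_toMeasurable _ _
  have hNnull : volume N = 0 := by rw [hNdef, measure_toMeasurable]; exact hBnull
  have hNeq : ∀ s : ℝ, 0 < s → s ∉ N → f s = f₀ s := fun s hs hsN => by
    by_contra h
    exact hsN (subset_toMeasurable _ _ ⟨h, hs⟩)
  -- the radial map
  set φ : Metric.sphere (0 : EuclideanSpace ℝ (Fin n)) 1 × Ioi (0:ℝ) → ℝ :=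
    fun p => (p.2 : ℝ) ^ (2*k) * |V p.1| with hφ
  have hφc : Continuous φ :=
    ((continuous_subtype_val.comp continuous_snd).pow _).mul
      ((hVc.comp (continuous_subtype_val.comp continuous_fst)).abs)
  have hφpos : ∀ p, 0 < φ p := fun p => mul_pos (pow_pos p.2.2 _) (hsph p.1)
  have hslice : ∀ η, ν (Prod.mk η ⁻¹' (φ ⁻¹' N)) = 0 := by
    intro η
    have hmeasS : MeasurableSet (Prod.mk η ⁻¹' (φ ⁻¹' N)) :=
      measurable_prodMk_left (hφc.measurable hNmeas)
    rw [hν, Measure.volumeIoiPow, withDensity_apply _ hmeasS]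
    refine setLIntegral_measure_zero _ _ ?_
    rw [comap_subtype_coe_apply measurableSet_Ioi]
    refine measure_mono_null ?_ (aux_null k hk (hsph η) hNnull)
    rintro x ⟨r, hr, rfl⟩
    exact ⟨r.2, hr⟩
  have hprodnull : (μ.toSphere.prod ν) (φ ⁻¹' N) = 0 := by
    rw [Measure.prod_apply (hφc.measurable hNmeas)]
    simp only [hslice, lintegral_zero]
  have hFae : (fun p => f₀ (φ p)) =ᵐ[μ.toSphere.prod ν] F := by
    rw [Filter.EventuallyEq, ae_iff]
    refine measure_mono_null (fun p hp => ?_) hprodnull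
    by_contra hpN
    exact hp (hNeq _ (hφpos p) hpN).symm
  have hFsm : AEStronglyMeasurable F (μ.toSphere.prod ν) :=
    ((hf₀m.comp_measurable hφc.measurable).aestronglyMeasurable).congr hFae
  have hf' : IntegrableOn (fun s => f s * s ^ ((n:ℝ)/(2*(k:ℝ)) - 1)) (Ioi 0) := hf
  have hFint : Integrable F (μ.toSphere.prod ν) := by
    rw [integrable_prod_iff hFsm]
    constructor
    · exact Filter.Eventually.of_forall fun η => aux_inner_int n k hn hk f (hsph η) hf'
    · have hcont : Continuous (fun η : Metric.sphere (0 : EuclideanSpace ℝ (Fin n)) 1 =>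
          |V η| ^ (-(n:ℝ)/(2*(k:ℝ)))) := by
        exact ((hVc.comp continuous_subtype_val).abs).rpow_const
          fun η => Or.inl (hsph η).ne'
      have hInt : Integrable (fun η : Metric.sphere (0 : EuclideanSpace ℝ (Fin n)) 1 =>
          |V η| ^ (-(n:ℝ)/(2*(k:ℝ))) * ((2*(k:ℝ))⁻¹ *
            ∫ s in Ioi (0:ℝ), |f s| * s ^ ((n:ℝ)/(2*(k:ℝ)) - 1))) μ.toSphere :=
        (hcont.mul continuous_const).integrable_of_hasCompactSupport
          (HasCompactSupport.of_compactSpace _)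
      refine hInt.congr (Filter.Eventually.of_forall fun η => ?_)
      simp only [hF, Real.norm_eq_abs]
      exact (aux_inner_eq n k hn hk (fun s => |f s|) (hsph η)).symm
  -- Fubini and conclusion
  calc ∫ x, f |V x| ∂μ = ∫ p, F p ∂(μ.toSphere.prod ν) := step1
    _ = ∫ η, ∫ r, F (η, r) ∂ν ∂μ.toSphere := integral_prod F hFint
    _ = ∫ η : Metric.sphere (0 : EuclideanSpace ℝ (Fin n)) 1,
          |V (η : EuclideanSpace ℝ (Fin n))| ^ (-(n : ℝ) / (2 * k))
          * ((2*(k:ℝ))⁻¹ * ∫ s in Ioi (0:ℝ), f s * s ^ ((n : ℝ) / (2 * k) - 1))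
          ∂μ.toSphere := by
        refine integral_congr_ae (Filter.Eventually.of_forall fun η => ?_)
        simp only [hF]
        rw [aux_inner_eq n k hn hk f (hsph η)]
    _ = _ := integral_mul_const _ _

open MeasureTheory Set

/-- If two continuous, positively `2k`-homogeneous, nonvanishing-away-from-`0`
functions have the same spherical average of `|·|^{-n/(2k)}`, then all pullback
integrals `∫_{ℝⁿ} f(|·|) dx` agree. -/
theorem spherical_average_determines_pullbacks
    (n : ℕ) (hn : 0 < n) (k : ℕ) (hk : 0 < k)
    (V2k W2k : EuclideanSpace ℝ (Fin n) → ℝ)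
    (hVc : Continuous V2k) (hWc : Continuous W2k)
    (hVhom : ∀ (lam : ℝ), 0 < lam → ∀ x, V2k (lam • x) = lam ^ (2 * k) * V2k x)
    (hWhom : ∀ (lam : ℝ), 0 < lam → ∀ x, W2k (lam • x) = lam ^ (2 * k) * W2k x)
    (hVne : ∀ x, x ≠ 0 → V2k x ≠ 0) (hWne : ∀ x, x ≠ 0 → W2k x ≠ 0)
    (heq : (∫ η : Metric.sphere (0 : EuclideanSpace ℝ (Fin n)) 1,
        |V2k (η : EuclideanSpace ℝ (Fin n))| ^ (-(n : ℝ) / (2 * k))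
        ∂((volume : Measure (EuclideanSpace ℝ (Fin n))).toSphere))
      = ∫ η : Metric.sphere (0 : EuclideanSpace ℝ (Fin n)) 1,
        |W2k (η : EuclideanSpace ℝ (Fin n))| ^ (-(n : ℝ) / (2 * k))
        ∂((volume : Measure (EuclideanSpace ℝ (Fin n))).toSphere)) :
    ∀ f : ℝ → ℝ,
      IntegrableOn (fun r => f r * r ^ ((n : ℝ) / (2 * k) - 1)) (Set.Ioi 0) →
      ∫ x : EuclideanSpace ℝ (Fin n), f |V2k x|
        = ∫ x : EuclideanSpace ℝ (Fin n), f |W2k x| := by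
  intro f hf
  rw [aux_key n k hn hk V2k hVc hVhom hVne f hf, aux_key n k hn hk W2k hWc hWhom hWne f hf,
    heq]
end
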